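/- Fix an integer d ≥ 3 and let τ_∞ be the measure on the closed unit ball 𝔻 of ℝ^{d−1} with density x ↦ (Γ((d+1)/2)/π^{(d−1)/2})(1 + x_d) with respect to Lebesgue measure, the coordinates of ℝ^{d−1} being labelled (x₂, …, x_d). Then: (a) for every 0 ≤ r ≤ 1, τ_∞(B_r(0)) = r^{d−1}, where B_r(0) is the closed Euclidean ball of radius r centered at the origin; and (b) for every 0 ≤ r ≤ 1 and y = (0, …, 0, −1 + r) ∈ ℝ^{d−1}, τ_∞(B_r(y)) = r^d. -/

import Mathlib

open MeasureTheory Real Set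

noncomputable section

/-- The limiting conditional exit distribution `τ_∞` on the closed unit ball of
`ℝ^{d-1}` (coordinates labelled `(x₂, …, x_d)`), with density
`x ↦ (Γ((d+1)/2)/π^{(d-1)/2}) (1 + x_d)` with respect to Lebesgue measure. -/
def tauInfty (d : ℕ) (hd : 3 ≤ d) : Measure (EuclideanSpace ℝ (Fin (d - 1))) :=
  (volume.restrict (Metric.closedBall (0 : EuclideanSpace ℝ (Fin (d - 1))) 1)).withDensity
    (fun x => ENNReal.ofReal
      (Real.Gamma (((d : ℝ) + 1) / 2) / π ^ (((d : ℝ) - 1) / 2) * (1 + x ⟨d - 2, by omega⟩)))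

-- odd coordinate integrates to zero on symmetric ball
lemma integral_coord_ball_zero {n : ℕ} (i : Fin n) (r : ℝ) :
    ∫ x in Metric.closedBall (0 : EuclideanSpace ℝ (Fin n)) r, x i = 0 := by
  have h : ∫ x in Metric.closedBall (0 : EuclideanSpace ℝ (Fin n)) r, x i
      = ∫ x, (Metric.closedBall (0 : EuclideanSpace ℝ (Fin n)) r).indicator
          (fun x => x i) x := (integral_indicator measurableSet_closedBall).symm
  have hneg : ∀ x : EuclideanSpace ℝ (Fin n),
      (Metric.closedBall (0 : EuclideanSpace ℝ (Fin n)) r).indicator (fun x => x i) (-x)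
        = - (Metric.closedBall (0 : EuclideanSpace ℝ (Fin n)) r).indicator (fun x => x i) x := by
    intro x
    by_cases hx : x ∈ Metric.closedBall (0 : EuclideanSpace ℝ (Fin n)) r
    · have hx' : -x ∈ Metric.closedBall (0 : EuclideanSpace ℝ (Fin n)) r := by
        simpa [mem_closedBall_zero_iff] using hx
      simp [Set.indicator_of_mem hx, Set.indicator_of_mem hx']
    · have hx' : -x ∉ Metric.closedBall (0 : EuclideanSpace ℝ (Fin n)) r := by
        simpa [mem_closedBall_zero_iff] using hx
      simp [Set.indicator_of_notMem hx, Set.indicator_of_notMem hx']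
  have := integral_neg_eq_self
    ((Metric.closedBall (0 : EuclideanSpace ℝ (Fin n)) r).indicator (fun x => x i))
    (volume : Measure (EuclideanSpace ℝ (Fin n)))
  rw [h]
  have h2 : ∫ x, (Metric.closedBall (0 : EuclideanSpace ℝ (Fin n)) r).indicator
      (fun x => x i) x = - ∫ x, (Metric.closedBall (0 : EuclideanSpace ℝ (Fin n)) r).indicator
      (fun x => x i) x := by
    conv_lhs => rw [← this]
    simp_rw [hneg]
    exact integral_neg _
  linarith

lemma integrableOn_coord_ball {n : ℕ} (i : Fin n) (z : EuclideanSpace ℝ (Fin n)) (r : ℝ) :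
    IntegrableOn (fun x : EuclideanSpace ℝ (Fin n) => x i) (Metric.closedBall z r) volume :=
  ((EuclideanSpace.proj (𝕜 := ℝ) i).continuous.continuousOn).integrableOn_compact
    (isCompact_closedBall z r)

lemma integral_coord_ball {n : ℕ} (i : Fin n) (z : EuclideanSpace ℝ (Fin n)) (r : ℝ) :
    ∫ x in Metric.closedBall z r, x i
      = z i * (volume (Metric.closedBall z r)).toReal := by
  have h : ∫ x in Metric.closedBall z r, (fun x : EuclideanSpace ℝ (Fin n) => x i) x
      = ∫ x, (Metric.closedBall z r).indicator (fun x => x i) x :=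
    (integral_indicator measurableSet_closedBall).symm
  have key := integral_add_right_eq_self (μ := (volume : Measure (EuclideanSpace ℝ (Fin n))))
    ((Metric.closedBall z r).indicator (fun x : EuclideanSpace ℝ (Fin n) => x i)) z
  have hind : ∀ x : EuclideanSpace ℝ (Fin n),
      (Metric.closedBall z r).indicator (fun x => x i) (x + z)
        = (Metric.closedBall (0 : EuclideanSpace ℝ (Fin n)) r).indicator
            (fun x => x i + z i) x := by
    intro x
    by_cases hx : x ∈ Metric.closedBall (0 : EuclideanSpace ℝ (Fin n)) r
    · have hx' : x + z ∈ Metric.closedBall z r := by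
        simpa [Metric.mem_closedBall, dist_eq_norm, mem_closedBall_zero_iff] using hx
      rw [Set.indicator_of_mem hx', Set.indicator_of_mem hx]
      rfl
    · have hx' : x + z ∉ Metric.closedBall z r := by
        simpa [Metric.mem_closedBall, dist_eq_norm, mem_closedBall_zero_iff] using hx
      rw [Set.indicator_of_notMem hx', Set.indicator_of_notMem hx]
  rw [h, ← key]
  simp_rw [hind]
  rw [integral_indicator measurableSet_closedBall]
  have hint1 : IntegrableOn (fun x : EuclideanSpace ℝ (Fin n) => x i)
      (Metric.closedBall (0 : EuclideanSpace ℝ (Fin n)) r) volume :=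
    integrableOn_coord_ball i 0 r
  rw [integral_add hint1 (integrableOn_const (by
      exact measure_closedBall_lt_top.ne))]
  rw [integral_coord_ball_zero, setIntegral_const, zero_add, smul_eq_mul,
    Measure.addHaar_closedBall_center, mul_comm]
  rfl

lemma abs_coord_le_norm {n : ℕ} (x : EuclideanSpace ℝ (Fin n)) (i : Fin n) : |x i| ≤ ‖x‖ := by
  rw [EuclideanSpace.norm_eq, ← Real.sqrt_sq_eq_abs]
  apply Real.sqrt_le_sqrt
  calc (x i) ^ 2 = ‖x i‖ ^ 2 := by rw [Real.norm_eq_abs, sq_abs]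
    _ ≤ ∑ j, ‖x j‖ ^ 2 :=
      Finset.single_le_sum (f := fun j => ‖x j‖ ^ 2) (fun j _ => sq_nonneg _) (Finset.mem_univ i)

lemma key_const (d : ℕ) (hd : 3 ≤ d) (r : ℝ) (hr : 0 ≤ r) :
    Real.Gamma (((d : ℝ) + 1) / 2) / π ^ (((d : ℝ) - 1) / 2)
      * (volume (Metric.closedBall (0 : EuclideanSpace ℝ (Fin (d - 1))) r)).toReal
    = r ^ (d - 1) := by
  haveI : Nonempty (Fin (d - 1)) := ⟨⟨0, by omega⟩⟩
  rw [EuclideanSpace.volume_closedBall]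
  have hcard : Fintype.card (Fin (d - 1)) = d - 1 := Fintype.card_fin _
  rw [hcard]
  have hG : 0 < Real.Gamma (((d - 1 : ℕ) : ℝ) / 2 + 1) :=
    Real.Gamma_pos_of_pos (by positivity)
  rw [ENNReal.toReal_mul, ENNReal.toReal_pow, ENNReal.toReal_ofReal hr,
    ENNReal.toReal_ofReal (by positivity)]
  have hcast : ((d - 1 : ℕ) : ℝ) = (d : ℝ) - 1 := by
    have : (1 : ℕ) ≤ d := by omega
    push_cast [this]; ring
  have hG2 : Real.Gamma (((d : ℝ) + 1) / 2) = Real.Gamma (((d - 1 : ℕ) : ℝ) / 2 + 1) := by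
    rw [hcast]; ring_nf
  have hpow : Real.sqrt π ^ (d - 1) = π ^ (((d : ℝ) - 1) / 2) := by
    rw [Real.sqrt_eq_rpow, ← Real.rpow_natCast (π ^ ((1 : ℝ)/2)) (d - 1),
      ← Real.rpow_mul pi_pos.le, hcast]
    ring_nf
  rw [hG2, hpow]
  have hpi : (0 : ℝ) < π ^ (((d : ℝ) - 1) / 2) := Real.rpow_pos_of_pos pi_pos _
  have habc : ∀ (a b c : ℝ), a ≠ 0 → b ≠ 0 → a / b * (c * (b / a)) = c := by
    intro a b c ha hb; field_simp
  exact habc _ _ _ hG.ne' hpi.ne'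

lemma tau_ball (d : ℕ) (hd : 3 ≤ d) (z : EuclideanSpace ℝ (Fin (d - 1))) (r : ℝ) (hr0 : 0 ≤ r)
    (hsub : Metric.closedBall z r ⊆
      Metric.closedBall (0 : EuclideanSpace ℝ (Fin (d - 1))) 1) :
    tauInfty d hd (Metric.closedBall z r)
      = ENNReal.ofReal ((1 + z ⟨d - 2, by omega⟩) * r ^ (d - 1)) := by
  set i : Fin (d - 1) := ⟨d - 2, by omega⟩ with hi
  set c := Real.Gamma (((d : ℝ) + 1) / 2) / π ^ (((d : ℝ) - 1) / 2) with hc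
  have hc0 : 0 ≤ c := by
    apply div_nonneg (Real.Gamma_pos_of_pos (by positivity)).le
    exact (Real.rpow_pos_of_pos pi_pos _).le
  rw [tauInfty, withDensity_apply _ measurableSet_closedBall,
    Measure.restrict_restrict measurableSet_closedBall, Set.inter_eq_left.mpr hsub]
  have hcont : Continuous (fun x : EuclideanSpace ℝ (Fin (d - 1)) => c * (1 + x i)) := by
    exact continuous_const.mul (continuous_const.add (EuclideanSpace.proj (𝕜 := ℝ) i).continuous)
  have hint : Integrable (fun x : EuclideanSpace ℝ (Fin (d - 1)) => c * (1 + x i))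
      (volume.restrict (Metric.closedBall z r)) :=
    hcont.continuousOn.integrableOn_compact (isCompact_closedBall z r)
  have hnn : 0 ≤ᵐ[volume.restrict (Metric.closedBall z r)]
      (fun x : EuclideanSpace ℝ (Fin (d - 1)) => c * (1 + x i)) := by
    apply ae_restrict_of_forall_mem measurableSet_closedBall
    intro x hx
    have h1 : ‖x‖ ≤ 1 := by
      have := hsub hx
      simpa [mem_closedBall_zero_iff] using this
    have h2 : |x i| ≤ 1 := le_trans (abs_coord_le_norm x i) h1
    have : (0 : ℝ) ≤ 1 + x i := by
      have := abs_le.mp h2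
      linarith [this.1]
    exact mul_nonneg hc0 this
  rw [← ofReal_integral_eq_lintegral_ofReal hint hnn]
  congr 1
  rw [integral_const_mul]
  have hsplit : ∫ x in Metric.closedBall z r, (1 + x i)
      = (volume (Metric.closedBall z r)).toReal + z i * (volume (Metric.closedBall z r)).toReal := by
    rw [integral_add (integrableOn_const (C := (1 : ℝ)) measure_closedBall_lt_top.ne)
        (integrableOn_coord_ball i z r), setIntegral_const, smul_eq_mul, mul_one,
      integral_coord_ball, Measure.real]
  rw [hsplit]
  have hkey : c * (volume (Metric.closedBall (0 : EuclideanSpace ℝ (Fin (d - 1))) r)).toReal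
      = r ^ (d - 1) := key_const d hd r hr0
  rw [← Measure.addHaar_closedBall_center (volume) z (r := r)] at hkey
  have heq : c * ((volume (Metric.closedBall z r)).toReal
      + z i * (volume (Metric.closedBall z r)).toReal)
      = (c * (volume (Metric.closedBall z r)).toReal) * (1 + z i) := by ring
  rw [heq, hkey]
  ring

/-- (a) `τ_∞(B_r(0)) = r^{d-1}` for `0 ≤ r ≤ 1`; and (b) for `y = (0, …, 0, -1+r)`,
`τ_∞(B_r(y)) = r^d` for `0 ≤ r ≤ 1`. -/
theorem tauInfty_ball_measures (d : ℕ) (hd : 3 ≤ d) (r : ℝ) (hr : r ∈ Set.Icc (0 : ℝ) 1) :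
    tauInfty d hd (Metric.closedBall (0 : EuclideanSpace ℝ (Fin (d - 1))) r) =
        ENNReal.ofReal (r ^ (d - 1)) ∧
      tauInfty d hd (Metric.closedBall
          (WithLp.toLp 2 (fun i : Fin (d - 1) => if (i : ℕ) = d - 2 then -1 + r else 0) : EuclideanSpace ℝ (Fin (d - 1))) r) =
        ENNReal.ofReal (r ^ d) := by

  obtain ⟨hr0, hr1⟩ := hr
  constructor
  · rw [tau_ball d hd 0 r hr0 (Metric.closedBall_subset_closedBall hr1)]
    norm_num
  · set z : EuclideanSpace ℝ (Fin (d - 1)) :=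
      WithLp.toLp 2 (fun i : Fin (d - 1) => if (i : ℕ) = d - 2 then -1 + r else 0) with hz
    have hzeq : z = EuclideanSpace.single (⟨d - 2, by omega⟩ : Fin (d - 1)) (-1 + r) := by
      ext j
      rw [hz, EuclideanSpace.single_apply]
      simp only [Fin.ext_iff, PiLp.toLp_apply]
    have hznorm : ‖z‖ = 1 - r := by
      rw [hzeq, EuclideanSpace.norm_single, Real.norm_eq_abs, abs_of_nonpos (by linarith)]
      ring
    have hsub : Metric.closedBall z r ⊆
        Metric.closedBall (0 : EuclideanSpace ℝ (Fin (d - 1))) 1 := by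
      apply Metric.closedBall_subset_closedBall'
      rw [dist_zero_right, hznorm]; linarith
    rw [tau_ball d hd z r hr0 hsub]
    have hzi : z ⟨d - 2, by omega⟩ = -1 + r := by rw [hz]; simp
    rw [hzi]
    congr 1
    rw [show (1 : ℝ) + (-1 + r) = r by ring, ← pow_succ']
    congr 1
    omega
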